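/- Let T be a countable set, let τ and m be probability mass functions on T, and let a be a probability mass function on T with a(t) > 0 for all t such that the generalized chi-squared distance χ²_a(τ,m) = Σ_t (τ(t) − m(t))²/a(t) is finite. Then χ²_a(τ,m) equals the supremum, over all real-valued functions h on T that are square-summable with respect to a and have Var_a(h) > 0, of the ratio (E_τ[h] − E_m[h])² / Var_a(h), where E_p[h] = Σ_t h(t)p(t) and Var_a(h) = Σ_t h(t)²a(t) − (Σ_t h(t)a(t))². -/

import Mathlib

open Filter

private lemma tsum_cauchy_schwarz {T : Type*} (u v : T → ℝ)
    (hu : Summable (fun t => u t ^ 2)) (hv : Summable (fun t => v t ^ 2))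
    (huv : Summable (fun t => u t * v t)) :
    (∑' t, u t * v t) ^ 2 ≤ (∑' t, u t ^ 2) * (∑' t, v t ^ 2) := by
  refine le_of_tendsto (Filter.Tendsto.pow huv.hasSum 2)
    (Filter.Eventually.of_forall fun s => ?_)
  calc (∑ t ∈ s, u t * v t) ^ 2 ≤ (∑ t ∈ s, u t ^ 2) * (∑ t ∈ s, v t ^ 2) :=
        Finset.sum_mul_sq_le_sq_mul_sq s u v
    _ ≤ (∑' t, u t ^ 2) * (∑' t, v t ^ 2) := by
        apply mul_le_mul (Summable.sum_le_tsum s (fun t _ => sq_nonneg _) hu)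
          (Summable.sum_le_tsum s (fun t _ => sq_nonneg _) hv)
          (Finset.sum_nonneg fun t _ => sq_nonneg _)
          (tsum_nonneg fun t => sq_nonneg _)

theorem chiSquared_is_sup_of_standardized_mean_differences
    {T : Type*} [Countable T] (τ m a : T → ℝ)
    (hτ0 : ∀ t, 0 ≤ τ t) (hτ1 : (∑' t, τ t) = 1)
    (hm0 : ∀ t, 0 ≤ m t) (hm1 : (∑' t, m t) = 1)
    (ha0 : ∀ t, 0 < a t) (ha1 : (∑' t, a t) = 1)
    (hchi : Summable fun t => (τ t - m t) ^ 2 / a t) :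
    (∑' t, (τ t - m t) ^ 2 / a t) =
      sSup { r : ℝ | ∃ h : T → ℝ,
        Summable (fun t => (h t) ^ 2 * a t) ∧
        Summable (fun t => h t * τ t) ∧
        Summable (fun t => h t * m t) ∧
        0 < (∑' t, (h t) ^ 2 * a t) - (∑' t, h t * a t) ^ 2 ∧
        r = ((∑' t, h t * τ t) - (∑' t, h t * m t)) ^ 2 /
            ((∑' t, (h t) ^ 2 * a t) - (∑' t, h t * a t) ^ 2) } := by
  classical
  set χ := ∑' t, (τ t - m t) ^ 2 / a t with hχdef
  set S := { r : ℝ | ∃ h : T → ℝ,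
        Summable (fun t => (h t) ^ 2 * a t) ∧
        Summable (fun t => h t * τ t) ∧
        Summable (fun t => h t * m t) ∧
        0 < (∑' t, (h t) ^ 2 * a t) - (∑' t, h t * a t) ^ 2 ∧
        r = ((∑' t, h t * τ t) - (∑' t, h t * m t)) ^ 2 /
            ((∑' t, (h t) ^ 2 * a t) - (∑' t, h t * a t) ^ 2) } with hSdef
  have hτs : Summable τ := by
    by_contra hc; rw [tsum_eq_zero_of_not_summable hc] at hτ1; norm_num at hτ1
  have hms : Summable m := by
    by_contra hc; rw [tsum_eq_zero_of_not_summable hc] at hm1; norm_num at hm1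
  have has : Summable a := by
    by_contra hc; rw [tsum_eq_zero_of_not_summable hc] at ha1; norm_num at ha1
  -- Upper bound: every element of S is ≤ χ
  have hub : ∀ r ∈ S, r ≤ χ := by
    rintro r ⟨h, hh2, hhτ, hhm, hvar, rfl⟩
    set c := ∑' t, h t * a t with hcdef
    have hha : Summable (fun t => h t * a t) := by
      rw [← summable_abs_iff]
      apply Summable.of_nonneg_of_le (fun t => abs_nonneg _)
        (fun t => ?_) (((hh2.add has).div_const 2))
      have h1 := ha0 t
      have h2 : |h t * a t| = |h t| * a t := by
        rw [abs_mul, abs_of_pos h1]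
      rw [h2]
      have := abs_nonneg (h t)
      have := sq_abs (h t)
      nlinarith [sq_nonneg (|h t| - 1)]
    set u := fun t => (h t - c) * Real.sqrt (a t) with hudef
    set v := fun t => (τ t - m t) / Real.sqrt (a t) with hvdef
    have hsq : ∀ t, Real.sqrt (a t) ^ 2 = a t := fun t => Real.sq_sqrt (ha0 t).le
    have hsqpos : ∀ t, 0 < Real.sqrt (a t) := fun t => Real.sqrt_pos.mpr (ha0 t)
    have hu2 : (fun t => u t ^ 2) = fun t =>
        h t ^ 2 * a t - 2 * c * (h t * a t) + c ^ 2 * a t := by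
      funext t; simp only [hudef, mul_pow, hsq t]; ring
    have hu2s : Summable (fun t => u t ^ 2) := by
      rw [hu2]
      exact ((hh2.sub (hha.mul_left (2 * c))).add (has.mul_left (c ^ 2)))
    have hv2 : (fun t => v t ^ 2) = fun t => (τ t - m t) ^ 2 / a t := by
      funext t; rw [hvdef]; rw [div_pow, hsq t]
    have hv2s : Summable (fun t => v t ^ 2) := by rw [hv2]; exact hchi
    have huv : (fun t => u t * v t) = fun t =>
        h t * τ t - h t * m t - c * τ t + c * m t := by
      funext t
      simp only [hudef, hvdef]
      rw [mul_div_assoc', mul_comm (h t - c), mul_assoc, mul_div_cancel_left₀ _ (hsqpos t).ne']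
      ring
    have huvs : Summable (fun t => u t * v t) := by
      rw [huv]
      exact ((hhτ.sub hhm).sub (hτs.mul_left c)).add (hms.mul_left c)
    have htuv : (∑' t, u t * v t) = (∑' t, h t * τ t) - (∑' t, h t * m t) := by
      rw [huv]
      rw [Summable.tsum_add ((hhτ.sub hhm).sub (hτs.mul_left c)) (hms.mul_left c),
        Summable.tsum_sub (hhτ.sub hhm) (hτs.mul_left c), Summable.tsum_sub hhτ hhm,
        tsum_mul_left, tsum_mul_left, hτ1, hm1]
      ring
    have htu2 : (∑' t, u t ^ 2) = (∑' t, h t ^ 2 * a t) - c ^ 2 := by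
      rw [hu2]
      rw [Summable.tsum_add (hh2.sub (hha.mul_left (2 * c))) (has.mul_left (c ^ 2)),
        Summable.tsum_sub hh2 (hha.mul_left (2 * c)), tsum_mul_left, tsum_mul_left, ha1, ← hcdef]
      ring
    have hcs := tsum_cauchy_schwarz u v hu2s hv2s huvs
    rw [htuv, htu2, hv2] at hcs
    rw [div_le_iff₀ hvar]
    calc ((∑' t, h t * τ t) - (∑' t, h t * m t)) ^ 2
        ≤ ((∑' t, h t ^ 2 * a t) - c ^ 2) * χ := hcs
      _ = χ * ((∑' t, h t ^ 2 * a t) - (∑' t, h t * a t) ^ 2) := by rw [← hcdef]; ring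
  -- key: any finset with positive partial chi-square is dominated by an element of S
  have hkey : ∀ s : Finset T, 0 < (∑ t ∈ s, (τ t - m t) ^ 2 / a t) →
      ∃ r ∈ S, (∑ t ∈ s, (τ t - m t) ^ 2 / a t) ≤ r := by
    intro s hC
    set C := ∑ t ∈ s, (τ t - m t) ^ 2 / a t with hCdef
    set D := ∑ t ∈ s, (τ t - m t) with hDdef
    set h : T → ℝ := fun t => if t ∈ s then (τ t - m t) / a t else 0 with hhdef
    have hz : ∀ t ∉ s, h t = 0 := fun t ht => by simp [hhdef, ht]
    have hh2s : Summable (fun t => h t ^ 2 * a t) :=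
      summable_of_ne_finset_zero (s := s) (fun t ht => by simp [hz t ht])
    have hhτs : Summable (fun t => h t * τ t) :=
      summable_of_ne_finset_zero (s := s) (fun t ht => by simp [hz t ht])
    have hhms : Summable (fun t => h t * m t) :=
      summable_of_ne_finset_zero (s := s) (fun t ht => by simp [hz t ht])
    have e1 : (∑' t, h t ^ 2 * a t) = C := by
      rw [tsum_eq_sum (s := s) (fun t ht => by simp [hz t ht])]
      apply Finset.sum_congr rfl
      intro t ht
      simp only [hhdef, if_pos ht]
      field_simp
    have e2 : (∑' t, h t * a t) = D := by
      rw [tsum_eq_sum (s := s) (fun t ht => by simp [hz t ht])]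
      apply Finset.sum_congr rfl
      intro t ht
      simp only [hhdef, if_pos ht]
      field_simp
      exact mul_div_cancel_right₀ _ (ha0 t).ne'
    have e3 : (∑' t, h t * τ t) - (∑' t, h t * m t) = C := by
      rw [tsum_eq_sum (s := s) (fun t ht => by simp [hz t ht]),
        tsum_eq_sum (s := s) (fun t ht => by simp [hz t ht]), ← Finset.sum_sub_distrib]
      apply Finset.sum_congr rfl
      intro t ht
      simp only [hhdef, if_pos ht]
      have := (ha0 t).ne'
      field_simp
    -- Cauchy-Schwarz: D^2 ≤ C * (∑ t in s, a t)
    have hDC : D ^ 2 ≤ C * (∑ t ∈ s, a t) := by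
      have := Finset.sum_mul_sq_le_sq_mul_sq s
        (fun t => (τ t - m t) / Real.sqrt (a t)) (fun t => Real.sqrt (a t))
      have e : ∀ t ∈ s, (τ t - m t) / Real.sqrt (a t) * Real.sqrt (a t) = τ t - m t := by
        intro t _
        exact div_mul_cancel₀ _ (Real.sqrt_pos.mpr (ha0 t)).ne'
      rw [Finset.sum_congr rfl e] at this
      have e' : ∀ t ∈ s, ((τ t - m t) / Real.sqrt (a t)) ^ 2 = (τ t - m t) ^ 2 / a t := by
        intro t _
        rw [div_pow, Real.sq_sqrt (ha0 t).le]
      have e'' : ∀ t ∈ s, (Real.sqrt (a t)) ^ 2 = a t := fun t _ => Real.sq_sqrt (ha0 t).le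
      rw [Finset.sum_congr rfl e', Finset.sum_congr rfl e''] at this
      exact this
    have hvar : 0 < C - D ^ 2 := by
      by_cases hcov : ∀ t, t ∈ s
      · have hD0 : D = 0 := by
          have eτ : (∑' t, τ t) = ∑ t ∈ s, τ t :=
            tsum_eq_sum (fun t ht => absurd (hcov t) ht)
          have em : (∑' t, m t) = ∑ t ∈ s, m t :=
            tsum_eq_sum (fun t ht => absurd (hcov t) ht)
          rw [hDdef, Finset.sum_sub_distrib, ← eτ, ← em, hτ1, hm1]
          ring
        rw [hD0]; simpa using hC
      · push_neg at hcov
        obtain ⟨t0, ht0⟩ := hcov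
        have hA : (∑ t ∈ s, a t) < 1 := by
          have h1 : (∑ t ∈ insert t0 s, a t) ≤ 1 := by
            rw [← ha1]
            exact Summable.sum_le_tsum _ (fun t _ => (ha0 t).le) has
          rw [Finset.sum_insert ht0] at h1
          linarith [ha0 t0]
        nlinarith
    refine ⟨C ^ 2 / (C - D ^ 2), ⟨h, hh2s, hhτs, hhms, ?_, ?_⟩, ?_⟩
    · rw [e1, e2]; exact hvar
    · rw [e1, e2, e3]
    · rw [le_div_iff₀ hvar]
      nlinarith [sq_nonneg D]
  -- split on whether χ = 0
  have hχ0 : 0 ≤ χ := tsum_nonneg fun t => div_nonneg (sq_nonneg _) (ha0 t).le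
  rcases eq_or_lt_of_le hχ0 with hχz | hχpos
  · -- χ = 0 : then τ = m and every element of S is 0
    have hτm : ∀ t, τ t = m t := by
      intro t
      have h1 : (τ t - m t) ^ 2 / a t ≤ 0 := by
        rw [hχdef] at hχz
        calc (τ t - m t) ^ 2 / a t ≤ χ :=
              Summable.le_tsum hchi t (fun t' _ => div_nonneg (sq_nonneg _) (ha0 t').le)
          _ = 0 := hχz.symm
      have h2 : 0 ≤ (τ t - m t) ^ 2 / a t := div_nonneg (sq_nonneg _) (ha0 t).le
      have h3 : (τ t - m t) ^ 2 / a t = 0 := le_antisymm h1 h2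
      have := (div_eq_zero_iff.mp h3).resolve_right (ha0 t).ne'
      nlinarith [sq_nonneg (τ t - m t)]
    have hS0 : S ⊆ {0} := by
      rintro r ⟨h, hh2, hhτ, hhm, hvar, rfl⟩
      have : (fun t => h t * τ t) = fun t => h t * m t := by
        funext t; rw [hτm t]
      rw [this]
      simp
    rcases Set.eq_empty_or_nonempty S with hSe | hSne
    · rw [hSe, Real.sSup_empty, ← hχz]
    · have : S = {0} := le_antisymm hS0 (by
        obtain ⟨r, hr⟩ := hSne
        have := hS0 hr
        simp only [Set.mem_singleton_iff] at this
        subst this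
        intro x hx
        simp only [Set.mem_singleton_iff] at hx
        subst hx
        exact hr)
      rw [this, csSup_singleton, ← hχz]
  · -- χ > 0
    have hSne : S.Nonempty := by
      have : ∃ s : Finset T, 0 < (∑ t ∈ s, (τ t - m t) ^ 2 / a t) := by
        by_contra hc
        push_neg at hc
        have : χ ≤ 0 := Summable.tsum_le_of_sum_le hchi hc
        linarith
      obtain ⟨s, hs⟩ := this
      obtain ⟨r, hr, _⟩ := hkey s hs
      exact ⟨r, hr⟩
    have hbdd : BddAbove S := ⟨χ, hub⟩
    apply le_antisymm
    · -- χ ≤ sSup S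
      have hnn : 0 ≤ sSup S := by
        obtain ⟨r, hr⟩ := hSne
        obtain ⟨h, h1, h2, h3, hvar, rfl⟩ := hr
        have hmem : ((∑' t, h t * τ t) - (∑' t, h t * m t)) ^ 2 /
            ((∑' t, (h t) ^ 2 * a t) - (∑' t, h t * a t) ^ 2) ∈ S :=
          ⟨h, h1, h2, h3, hvar, rfl⟩
        exact le_trans (div_nonneg (sq_nonneg _) hvar.le) (le_csSup hbdd hmem)
      apply Summable.tsum_le_of_sum_le hchi
      intro s
      rcases le_or_gt (∑ t ∈ s, (τ t - m t) ^ 2 / a t) 0 with hs | hs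
      · linarith
      · obtain ⟨r, hr, hle⟩ := hkey s hs
        exact le_trans hle (le_csSup hbdd hr)
    · exact csSup_le hSne hub
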